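/- Suppose I = I^im (the Borcherds–Cartan matrix is purely imaginary). Let M be the monoid presented by generators {g_a : a ∈ I} and relations g_a g_{a'} = g_{a'} g_a for all a, a' ∈ I with A_{aa'} = 0 (a right-angled Artin monoid). Then the map M → RC(∞) sending the class of a word g_{a_1}⋯g_{a_r} to f_{a_1}⋯f_{a_r}(ν_∅,J_∅) is well defined and bijective. -/

import Mathlib

/-! Rigged configurations for generalized Kac–Moody (Borcherds) algebras. -/

/-- A Borcherds–Cartan matrix: integer matrix with `A a a = 2` or `A a a` nonpositive even,
nonpositive off-diagonal entries, and `A a b = 0 ↔ A b a = 0`. -/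
structure IsBorcherdsCartan {I : Type*} (A : I → I → ℤ) : Prop where
  diag : ∀ a, A a a = 2 ∨ (A a a ≤ 0 ∧ Even (A a a))
  offdiag : ∀ a b, a ≠ b → A a b ≤ 0
  zero_iff : ∀ a b, A a b = 0 ↔ A b a = 0

/-- A (raw) rigged configuration: for each color `a ∈ I`, a multiset of pairs
`(row length, rigging)`.  Rows of length `0` with rigging `0` are treated implicitly by the
operators below. -/
abbrev RCraw (I : Type*) := I → Multiset (ℕ × ℤ)

variable {I : Type*} [DecidableEq I]

/-- The empty rigged configuration `(ν_∅, J_∅)`. -/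
def emptyRC : RCraw I := fun _ => 0

/-- `|ν^(b)|`, the number of boxes of color `b`. -/
def rcSize (ν : RCraw I) (b : I) : ℤ := ((ν b).map fun p => (p.1 : ℤ)).sum

/-- The vacancy number `p_i^(a) = -∑_b A a b ∑_{rows j of ν^(b)} min i j`. -/
noncomputable def vac (A : I → I → ℤ) (ν : RCraw I) (a : I) (i : ℕ) : ℤ :=
  -∑ᶠ b, A a b * ((ν b).map fun p => (min i p.1 : ℤ)).sum

/-- The limiting vacancy number `p_∞^(a) = -∑_b A a b |ν^(b)| = ⟨h_a, wt(ν,J)⟩`. -/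
noncomputable def pInf (A : I → I → ℤ) (ν : RCraw I) (a : I) : ℤ :=
  -∑ᶠ b, A a b * rcSize ν b

/-- Minimum of a multiset of integers together with `0` (the rigging of the implicit
length-`0` rows). -/
def minWith0 (s : Multiset ℤ) : ℤ := s.fold min 0

/-- Minimum of a nonempty multiset of integers (junk value `0` on the empty multiset). -/
def minPosRows (s : Multiset ℤ) : ℤ := s.fold min (s.fold max 0)

/-- Maximum of a multiset of naturals together with `0`. -/
def maxWith0 (s : Multiset ℕ) : ℕ := s.fold max 0

/-- Minimum of a nonempty multiset of naturals (junk value on the empty multiset). -/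
def minPosRowsN (s : Multiset ℕ) : ℕ := s.fold min (s.fold max 0)

/-- The crystal operator `f_a` on rigged configurations: add a box to a row of maximal
length among the rows of `ν^(a)` whose rigging equals the smallest rigging `x` (with the
length-`0` rows of rigging `0` included), give the new row the rigging `x - A a a / 2`, and
change all other riggings so that the coriggings are preserved. -/
def fOp (A : I → I → ℤ) (a : I) (ν : RCraw I) : RCraw I :=
  let M := ν a
  let x := minWith0 (M.map Prod.snd)
  let ℓ := maxWith0 ((M.filter fun p => p.2 = x).map Prod.fst)
  fun b =>
    let adj : Multiset (ℕ × ℤ) → Multiset (ℕ × ℤ) :=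
      Multiset.map fun p => (p.1, p.2 - if ℓ < p.1 then A b a else 0)
    if b = a then adj (M.erase (ℓ, x)) + {(ℓ + 1, x - A a a / 2)} else adj (ν b)

/-- Auxiliary for `eOp`: remove a box from a row of minimal (positive) length among the
rows of `ν^(a)` with rigging `x`, give it the rigging `x + A a a / 2` (dropping the row if
its length becomes `0`), and change all other riggings so that the coriggings are
preserved. -/
def eRemove (A : I → I → ℤ) (a : I) (ν : RCraw I) (x : ℤ) : RCraw I :=
  let M := ν a
  let ℓ := minPosRowsN ((M.filter fun p => p.2 = x).map Prod.fst)
  fun b =>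
    let adj : Multiset (ℕ × ℤ) → Multiset (ℕ × ℤ) :=
      Multiset.map fun p => (p.1, p.2 + if ℓ ≤ p.1 then A b a else 0)
    if b = a then
      adj (M.erase (ℓ, x)) + (if ℓ = 1 then 0 else {(ℓ - 1, x + A a a / 2)})
    else adj (ν b)

/-- The crystal operator `e_a` on rigged configurations. -/
def eOp (A : I → I → ℤ) (a : I) (ν : RCraw I) : Option (RCraw I) :=
  if A a a = 2 then
    let x := minWith0 ((ν a).map Prod.snd)
    if x = 0 then none else some (eRemove A a ν x)
  else
    if ν a = 0 ∨ minPosRows ((ν a).map Prod.snd) ≠ -A a a / 2 then none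
    else some (eRemove A a ν (-A a a / 2))

/-- The multiset of coriggings `p_i^(a) - x` of the (positive length) rows of `ν^(a)`. -/
noncomputable def corigs (A : I → I → ℤ) (ν : RCraw I) (a : I) : Multiset ℤ :=
  (ν a).map fun p => vac A ν a p.1 - p.2

open scoped Classical in
/-- The star crystal operator `f_a^*`: add a box to a row of maximal length among the rows
of `ν^(a)` whose corigging equals the smallest corigging `x` (with the length-`0` rows of
corigging `0` included), set the rigging of the new row so that its corigging is
`x - A a a / 2`, and keep all other riggings fixed. -/
noncomputable def fStar (A : I → I → ℤ) (a : I) (ν : RCraw I) : RCraw I :=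
  let M := ν a
  let x := minWith0 (corigs A ν a)
  let ℓ := maxWith0 ((M.filter fun p => vac A ν a p.1 - p.2 = x).map Prod.fst)
  fun b =>
    if b = a then
      M.erase (ℓ, vac A ν a ℓ - x) + {(ℓ + 1, (vac A ν a (ℓ + 1) - A a a) - (x - A a a / 2))}
    else ν b

open scoped Classical in
/-- Auxiliary for `eStarOp`: remove a box from a row of minimal (positive) length among
the rows of `ν^(a)` with corigging `x`, set its rigging so that its corigging is
`x - A a a / 2` (dropping the row if its length becomes `0`), and keep all other riggings
fixed. -/
noncomputable def eStarRemove (A : I → I → ℤ) (a : I) (ν : RCraw I) (x : ℤ) : RCraw I :=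
  let M := ν a
  let ℓ := minPosRowsN ((M.filter fun p => vac A ν a p.1 - p.2 = x).map Prod.fst)
  fun b =>
    if b = a then
      M.erase (ℓ, vac A ν a ℓ - x) +
        (if ℓ = 1 then 0 else {(ℓ - 1, vac A ν a (ℓ - 1) - (x - A a a / 2))})
    else ν b

/-- The star crystal operator `e_a^*`. -/
noncomputable def eStarOp (A : I → I → ℤ) (a : I) (ν : RCraw I) : Option (RCraw I) :=
  if A a a = 2 then
    let x := minWith0 (corigs A ν a)
    if x = 0 then none else some (eStarRemove A a ν x)
  else
    if ν a = 0 ∨ minPosRows (corigs A ν a) ≠ -A a a / 2 then none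
    else some (eStarRemove A a ν (-A a a / 2))

/-- `RC(∞)`: the set of rigged configurations generated from the empty rigged
configuration by the operators `e_a`, `f_a`. -/
inductive RCinf (A : I → I → ℤ) : RCraw I → Prop
  | empty : RCinf A emptyRC
  | fstep (a : I) (ν : RCraw I) : RCinf A ν → RCinf A (fOp A a ν)
  | estep (a : I) (ν ν' : RCraw I) : RCinf A ν → eOp A a ν = some ν' → RCinf A ν'

/-- `RC(∞)^*`: the set of rigged configurations generated from the empty rigged
configuration by the operators `e_a^*`, `f_a^*`. -/
inductive RCinfStar (A : I → I → ℤ) : RCraw I → Prop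
  | empty : RCinfStar A emptyRC
  | fstep (a : I) (ν : RCraw I) : RCinfStar A ν → RCinfStar A (fStar A a ν)
  | estep (a : I) (ν ν' : RCraw I) : RCinfStar A ν → eStarOp A a ν = some ν' → RCinfStar A ν'

/-- Iteration of a partial map. -/
def iterOpt {α : Type*} (g : α → Option α) : ℕ → α → Option α
  | 0, v => some v
  | k + 1, v => (iterOpt g k v).bind g

/-- `tε_a(ν,J) = max {k | e_a^k (ν,J) ≠ 0}`. -/
noncomputable def teRC (A : I → I → ℤ) (a : I) (ν : RCraw I) : ℕ :=
  sSup {k | iterOpt (eOp A a) k ν ≠ none}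

/-- `tε_a^*(ν,J) = max {k | (e_a^*)^k (ν,J) ≠ 0}`. -/
noncomputable def teStarRC (A : I → I → ℤ) (a : I) (ν : RCraw I) : ℕ :=
  sSup {k | iterOpt (eStarOp A a) k ν ≠ none}

/-- `ε_a`: for real `a` the maximal number of applications of `e_a`, for imaginary `a`
zero. -/
noncomputable def epsRC (A : I → I → ℤ) (a : I) (ν : RCraw I) : ℤ :=
  if A a a = 2 then (teRC A a ν : ℤ) else 0

/-- `φ_a(ν,J) = ⟨h_a, wt(ν,J)⟩ + ε_a(ν,J)`. -/
noncomputable def phiRC (A : I → I → ℤ) (a : I) (ν : RCraw I) : ℤ :=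
  pInf A ν a + epsRC A a ν

/-- `ε_a^*`: for real `a` the maximal number of applications of `e_a^*`, for imaginary `a`
zero. -/
noncomputable def epsStarRC (A : I → I → ℤ) (a : I) (ν : RCraw I) : ℤ :=
  if A a a = 2 then (teStarRC A a ν : ℤ) else 0

/-- `φ_a^*(ν,J) = ⟨h_a, wt(ν,J)⟩ + ε_a^*(ν,J)`. -/
noncomputable def phiStarRC (A : I → I → ℤ) (a : I) (ν : RCraw I) : ℤ :=
  pInf A ν a + epsStarRC A a ν

/-- The weight of a rigged configuration, as the coefficient function of
`-∑_a |ν^(a)| α_a`. -/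
def wtRC (ν : RCraw I) : I → ℤ := fun b => -rcSize ν b

/-- For imaginary `a`, `κ_a(ν,J) = tε_a^*(ν,J)·A a a + ⟨h_a, wt(ν,J)⟩`. -/
noncomputable def kappaRC (A : I → I → ℤ) (a : I) (ν : RCraw I) : ℤ :=
  (teStarRC A a ν : ℤ) * A a a + pInf A ν a

/-- For imaginary `a`, `κ_a^*(ν,J) = tε_a(ν,J)·A a a + ⟨h_a, wt(ν,J)⟩`. -/
noncomputable def kappaStarRC (A : I → I → ℤ) (a : I) (ν : RCraw I) : ℤ :=
  (teRC A a ν : ℤ) * A a a + pInf A ν a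

/-- The defining relations of the right-angled Artin monoid
`⟨g_a | g_a g_{a'} = g_{a'} g_a if A a a' = 0⟩`. -/
def raagRel (A : I → I → ℤ) : FreeMonoid I → FreeMonoid I → Prop := fun x y =>
  ∃ a a' : I, A a a' = 0 ∧
    x = FreeMonoid.of a * FreeMonoid.of a' ∧ y = FreeMonoid.of a' * FreeMonoid.of a

set_option linter.unusedSectionVars false

namespace RCAux

section fold
variable {α : Type*} [LinearOrder α]

lemma fold_min_le (s : Multiset α) (b : α) {t : α} (ht : t ∈ s) : s.fold min b ≤ t := by
  induction s using Multiset.induction_on with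
  | empty => simp at ht
  | cons a s ih =>
    rw [Multiset.fold_cons_left]
    rcases Multiset.mem_cons.1 ht with h | h
    · subst h; exact min_le_left _ _
    · exact le_trans (min_le_right _ _) (ih h)

lemma fold_min_le_seed (s : Multiset α) (b : α) : s.fold min b ≤ b := by
  induction s using Multiset.induction_on with
  | empty => simp
  | cons a s ih => rw [Multiset.fold_cons_left]; exact le_trans (min_le_right _ _) ih

lemma le_fold_min {c : α} (s : Multiset α) (b : α) (hb : c ≤ b) (h : ∀ t ∈ s, c ≤ t) :
    c ≤ s.fold min b := by
  induction s using Multiset.induction_on with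
  | empty => simpa
  | cons a s ih =>
    rw [Multiset.fold_cons_left]
    exact le_min (h a (Multiset.mem_cons_self _ _))
      (ih fun t ht => h t (Multiset.mem_cons_of_mem ht))

lemma le_fold_max (s : Multiset α) (b : α) {t : α} (ht : t ∈ s) : t ≤ s.fold max b := by
  induction s using Multiset.induction_on with
  | empty => simp at ht
  | cons a s ih =>
    rw [Multiset.fold_cons_left]
    rcases Multiset.mem_cons.1 ht with h | h
    · subst h; exact le_max_left _ _
    · exact le_trans (ih h) (le_max_right _ _)

lemma seed_le_fold_max (s : Multiset α) (b : α) : b ≤ s.fold max b := by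
  induction s using Multiset.induction_on with
  | empty => simp
  | cons a s ih => rw [Multiset.fold_cons_left]; exact le_trans ih (le_max_right _ _)

lemma fold_min_mem_or (s : Multiset α) (b : α) : s.fold min b = b ∨ s.fold min b ∈ s := by
  induction s using Multiset.induction_on with
  | empty => simp
  | cons a s ih =>
    rw [Multiset.fold_cons_left]
    rcases le_total a (s.fold min b) with h | h
    · right; rw [min_eq_left h]; exact Multiset.mem_cons_self _ _
    · rw [min_eq_right h]
      rcases ih with h' | h'
      · left; exact h'
      · right; exact Multiset.mem_cons_of_mem h'

lemma fold_max_mem_or (s : Multiset α) (b : α) : s.fold max b = b ∨ s.fold max b ∈ s := by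
  induction s using Multiset.induction_on with
  | empty => simp
  | cons a s ih =>
    rw [Multiset.fold_cons_left]
    rcases le_total a (s.fold max b) with h | h
    · rw [max_eq_right h]
      rcases ih with h' | h'
      · left; exact h'
      · right; exact Multiset.mem_cons_of_mem h'
    · right; rw [max_eq_left h]; exact Multiset.mem_cons_self _ _

end fold

lemma minWith0_eq_zero {s : Multiset ℤ} (h : ∀ t ∈ s, (0 : ℤ) ≤ t) : minWith0 s = 0 :=
  le_antisymm (fold_min_le_seed s 0) (le_fold_min s 0 le_rfl h)

lemma minPosRows_mem {s : Multiset ℤ} (hs : s ≠ 0) : minPosRows s ∈ s := by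
  obtain ⟨t₀, ht₀⟩ := Multiset.exists_mem_of_ne_zero hs
  rcases fold_min_mem_or s (s.fold max 0) with h | h
  · have h1 : minPosRows s ≤ t₀ := fold_min_le s _ ht₀
    have h2 : t₀ ≤ s.fold max 0 := le_fold_max s 0 ht₀
    have : minPosRows s = t₀ := le_antisymm h1 (by rw [minPosRows] at *; omega)
    rw [this]; exact ht₀
  · exact h

lemma minPosRows_le {s : Multiset ℤ} {t : ℤ} (ht : t ∈ s) : minPosRows s ≤ t :=
  fold_min_le s _ ht

lemma minPosRows_eq_of {s : Multiset ℤ} {c : ℤ} (hc : c ∈ s) (h : ∀ t ∈ s, c ≤ t) :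
    minPosRows s = c :=
  le_antisymm (minPosRows_le hc) (h _ (minPosRows_mem (by rintro rfl; simp at hc)))

lemma le_maxWith0 {s : Multiset ℕ} {t : ℕ} (ht : t ∈ s) : t ≤ maxWith0 s := le_fold_max s 0 ht

lemma maxWith0_mem {s : Multiset ℕ} (h : maxWith0 s ≠ 0) : maxWith0 s ∈ s := by
  rcases fold_max_mem_or s 0 with h' | h'
  · exact absurd h' h
  · exact h'

lemma minPosRowsN_mem {s : Multiset ℕ} (hs : s ≠ 0) : minPosRowsN s ∈ s := by
  obtain ⟨t₀, ht₀⟩ := Multiset.exists_mem_of_ne_zero hs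
  rcases fold_min_mem_or s (s.fold max 0) with h | h
  · have h1 : minPosRowsN s ≤ t₀ := fold_min_le s _ ht₀
    have h2 : t₀ ≤ s.fold max 0 := le_fold_max s 0 ht₀
    have : minPosRowsN s = t₀ := le_antisymm h1 (by rw [minPosRowsN] at *; omega)
    rw [this]; exact ht₀
  · exact h

lemma minPosRowsN_eq_of {s : Multiset ℕ} {c : ℕ} (hc : c ∈ s) (h : ∀ t ∈ s, c ≤ t) :
    minPosRowsN s = c :=
  le_antisymm (fold_min_le s _ hc) (h _ (minPosRowsN_mem (by rintro rfl; simp at hc)))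

lemma minPosRowsN_singleton (n : ℕ) : minPosRowsN {n} = n :=
  minPosRowsN_eq_of (Multiset.mem_singleton_self n) (by simp)

lemma maxWith0_zero : maxWith0 (0 : Multiset ℕ) = 0 := rfl

lemma maxWith0_singleton (n : ℕ) : maxWith0 ({n} : Multiset ℕ) = n := by
  rw [maxWith0, Multiset.fold_singleton]; exact Nat.max_zero n

lemma add_singleton_eq (s : Multiset (ℕ × ℤ)) (x : ℕ × ℤ) : s + {x} = x ::ₘ s := by
  rw [add_comm, Multiset.singleton_add]

end RCAux

namespace RCAux
variable {I : Type*} [DecidableEq I] (A : I → I → ℤ)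

/-- The rigging of a freshly created row of color `a`. -/
def ca (a : I) : ℤ := 0 - A a a / 2

/-- minimal rigging selected by `fOp`. -/
def selX (ν : RCraw I) (a : I) : ℤ := minWith0 ((ν a).map Prod.snd)

/-- selected row length in `fOp`. -/
def selL (ν : RCraw I) (a : I) : ℕ :=
  maxWith0 (((ν a).filter fun p => p.2 = selX ν a).map Prod.fst)

/-- selected row length in `eRemove`. -/
def selE (ν : RCraw I) (a : I) (x : ℤ) : ℕ :=
  minPosRowsN (((ν a).filter fun p => p.2 = x).map Prod.fst)

lemma fOp_eq (a : I) (ν : RCraw I) : fOp A a ν = fun b =>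
    if b = a then
      Multiset.map (fun p => (p.1, p.2 - if selL ν a < p.1 then A b a else 0))
        ((ν a).erase (selL ν a, selX ν a)) + {(selL ν a + 1, selX ν a - A a a / 2)}
    else Multiset.map (fun p => (p.1, p.2 - if selL ν a < p.1 then A b a else 0)) (ν b) := rfl

lemma eRemove_eq (a : I) (ν : RCraw I) (x : ℤ) : eRemove A a ν x = fun b =>
    if b = a then
      Multiset.map (fun p => (p.1, p.2 + if selE ν a x ≤ p.1 then A b a else 0))
        ((ν a).erase (selE ν a x, x)) +
        (if selE ν a x = 1 then 0 else {(selE ν a x - 1, x + A a a / 2)})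
    else Multiset.map (fun p => (p.1, p.2 + if selE ν a x ≤ p.1 then A b a else 0)) (ν b) := rfl

/-- fresh rows of color `a`. -/
def frs (ν : RCraw I) (a : I) : Multiset (ℕ × ℤ) := (ν a).filter (fun p => p.2 = ca A a)

structure Inv (ν : RCraw I) : Prop where
  len : ∀ a, ∀ p ∈ ν a, 1 ≤ p.1
  rig : ∀ a, ∀ p ∈ ν a, ca A a ≤ p.2
  one : ∀ a, A a a ≠ 0 → ∀ p ∈ ν a, p.1 = 1
  uniq : ∀ a, Multiset.card (frs A ν a) ≤ 1
  pair : ∀ a b, a ≠ b → A a b ≠ 0 → frs A ν a = 0 ∨ frs A ν b = 0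

end RCAux

namespace RCAux
variable {I : Type*} [DecidableEq I] {A : I → I → ℤ}

section Borcherds
variable (hA : IsBorcherdsCartan A) (him : ∀ a : I, A a a ≤ 0)
include hA him

lemma diag_facts (a : I) : A a a = -(2 * ca A a) ∧ 0 ≤ ca A a := by
  rcases hA.diag a with h | ⟨h, r, hr⟩
  · have := him a; omega
  · have hca : ca A a = 0 - A a a / 2 := rfl
    constructor <;> omega

lemma ca_nonneg (a : I) : 0 ≤ ca A a := (diag_facts hA him a).2

lemma aa_ne_two (a : I) : A a a ≠ 2 := by have := him a; omega

lemma ca_pos (a : I) (h : A a a ≠ 0) : 1 ≤ ca A a := by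
  have := (diag_facts hA him a).1; have := (diag_facts hA him a).2; omega

lemma ca_eq_zero (a : I) (h : A a a = 0) : ca A a = 0 := by
  have := (diag_facts hA him a).1; omega

lemma neg_half_eq_ca (a : I) : -A a a / 2 = ca A a := by
  have h := (diag_facts hA him a).1; have := (diag_facts hA him a).2
  rw [ca] at *; omega

end Borcherds

lemma map_noop (s : Multiset (ℕ × ℤ)) (f : ℕ × ℤ → ℤ) (hf : ∀ p ∈ s, f p = p.2) :
    s.map (fun p => (p.1, f p)) = s := by
  have h : s.map (fun p => (p.1, f p)) = s.map id :=
    Multiset.map_congr rfl (fun x hx => by rw [hf x hx]; rfl)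
  rw [h, Multiset.map_id]

lemma fOp_ne (a c : I) (ν : RCraw I) (hc : c ≠ a) :
    (fOp A a ν) c =
      (ν c).map (fun p => (p.1, p.2 - if selL ν a < p.1 then A c a else 0)) := by
  rw [fOp_eq]; simp only [if_neg hc]

lemma fOp_self (a : I) (ν : RCraw I) :
    (fOp A a ν) a =
      Multiset.map (fun p => (p.1, p.2 - if selL ν a < p.1 then A a a else 0))
        ((ν a).erase (selL ν a, selX ν a)) + {(selL ν a + 1, selX ν a - A a a / 2)} := by
  rw [fOp_eq]; simp

lemma eRemove_ne (a c : I) (ν : RCraw I) (x : ℤ) (hc : c ≠ a) :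
    (eRemove A a ν x) c =
      (ν c).map (fun p => (p.1, p.2 + if selE ν a x ≤ p.1 then A c a else 0)) := by
  rw [eRemove_eq]; simp only [if_neg hc]

lemma eRemove_self (a : I) (ν : RCraw I) (x : ℤ) :
    (eRemove A a ν x) a =
      Multiset.map (fun p => (p.1, p.2 + if selE ν a x ≤ p.1 then A a a else 0))
        ((ν a).erase (selE ν a x, x)) +
        (if selE ν a x = 1 then 0 else {(selE ν a x - 1, x + A a a / 2)}) := by
  rw [eRemove_eq]; simp

section InvFacts
variable (hA : IsBorcherdsCartan A) (him : ∀ a : I, A a a ≤ 0)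
variable {ν : RCraw I} (hI : Inv A ν)
include hA him hI

lemma selX_zero (a : I) : selX ν a = 0 := by
  apply minWith0_eq_zero
  intro t ht
  obtain ⟨p, hp, rfl⟩ := Multiset.mem_map.1 ht
  exact le_trans (ca_nonneg hA him a) (hI.rig a p hp)

lemma filt_eq (a : I) (h : A a a = 0) :
    ((ν a).filter fun p => p.2 = selX ν a) = frs A ν a := by
  rw [selX_zero hA him hI, frs, ca_eq_zero hA him a h]

lemma filt_zero (a : I) (h : A a a ≠ 0) :
    ((ν a).filter fun p => p.2 = selX ν a) = 0 := by
  rw [selX_zero hA him hI, Multiset.filter_eq_nil]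
  intro p hp hp2
  have h1 := hI.rig a p hp
  have h2 := ca_pos hA him a h
  omega

lemma selL_zero_of_frs (a : I) (h : frs A ν a = 0) : selL ν a = 0 := by
  by_cases h0 : A a a = 0
  · rw [selL, filt_eq hA him hI a h0, h]; rfl
  · rw [selL, filt_zero hA him hI a h0]; rfl

lemma selL_zero_of_diag (a : I) (h : A a a ≠ 0) : selL ν a = 0 := by
  rw [selL, filt_zero hA him hI a h]; rfl

lemma frs_cases (a : I) : frs A ν a = 0 ∨ ∃ q, frs A ν a = {q} := by
  rcases Nat.le_one_iff_eq_zero_or_eq_one.1 (hI.uniq a) with h | h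
  · exact Or.inl (Multiset.card_eq_zero.1 h)
  · exact Or.inr (Multiset.card_eq_one.1 h)

lemma selL_mem (a : I) (h : selL ν a ≠ 0) : (selL ν a, selX ν a) ∈ ν a := by
  unfold selL at h ⊢
  have hm := maxWith0_mem h
  obtain ⟨p, hp, hp1⟩ := Multiset.mem_map.1 hm
  obtain ⟨hp', hp2⟩ := Multiset.mem_filter.1 hp
  have hpe : (maxWith0 (((ν a).filter fun p => p.2 = selX ν a).map Prod.fst), selX ν a) = p := by
    rw [← hp1, ← hp2]
  rw [hpe]; exact hp'

end InvFacts

end RCAux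

namespace RCAux
variable {I : Type*} [DecidableEq I] {A : I → I → ℤ}
lemma card_filter_mono {β : Type*} {P Q : β → Prop} [DecidablePred P] [DecidablePred Q]
    (s : Multiset β) (h : ∀ x ∈ s, P x → Q x) :
    Multiset.card (s.filter P) ≤ Multiset.card (s.filter Q) := by
  induction s using Multiset.induction_on with
  | empty => simp
  | cons a s ih =>
    have ih' := ih (fun x hx => h x (Multiset.mem_cons_of_mem hx))
    have ha := h a (Multiset.mem_cons_self a s)
    by_cases hP : P a <;> by_cases hQ : Q a <;>
      simp [Multiset.filter_cons, hP, hQ] <;> first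
        | omega
        | exact le_trans ih' (Nat.le_succ _)
        | exact absurd (ha hP) hQ

lemma frs_fOp_card' (a c : I) (hc : c ≠ a) (hoff : A c a ≤ 0)
    (hrig : ∀ p ∈ ν c, ca A c ≤ p.2) :
    Multiset.card (frs A (fOp A a ν) c) ≤ Multiset.card (frs A ν c) := by
  rw [frs, fOp_ne a c ν hc, Multiset.filter_map, Multiset.card_map, frs]
  apply card_filter_mono
  intro p hp hP
  simp only [Function.comp] at hP
  have ht : (if selL ν a < p.1 then A c a else 0) ≤ 0 := by split <;> omega
  have h2 := hrig p hp
  omega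


section G
variable (hA : IsBorcherdsCartan A) (him : ∀ a : I, A a a ≤ 0)
variable {ν : RCraw I} (hI : Inv A ν)
include hA him hI

lemma selL_of_single (a : I) {q : ℕ × ℤ} (h0 : A a a = 0) (hq : frs A ν a = {q}) :
    selL ν a = q.1 ∧ q.2 = 0 := by
  have hqm : q ∈ frs A ν a := by rw [hq]; exact Multiset.mem_singleton_self q
  have hq2 : q.2 = 0 := by
    have := (Multiset.mem_filter.1 hqm).2
    rw [this, ca_eq_zero hA him a h0]
  refine ⟨?_, hq2⟩
  unfold selL
  rw [filt_eq hA him hI a h0, hq, Multiset.map_singleton, maxWith0_singleton]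

lemma frs_fOp_self (a : I) : frs A (fOp A a ν) a = {(selL ν a + 1, ca A a)} := by
  have hx := selX_zero hA him hI a
  rw [frs, fOp_self, Multiset.filter_add]
  have hnew : (selL ν a + 1, selX ν a - A a a / 2) = (selL ν a + 1, ca A a) := by
    rw [hx]; rfl
  rw [hnew, Multiset.filter_singleton, if_pos rfl]
  suffices h : Multiset.filter (fun p => p.2 = ca A a)
      (Multiset.map (fun p => (p.1, p.2 - if selL ν a < p.1 then A a a else 0))
        ((ν a).erase (selL ν a, selX ν a))) = 0 by
    rw [h, zero_add]
  rw [Multiset.filter_eq_nil]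
  rintro q hq hq2
  obtain ⟨p, hp, rfl⟩ := Multiset.mem_map.1 hq
  have hpν : p ∈ ν a := Multiset.mem_of_mem_erase hp
  simp only at hq2
  by_cases h0 : A a a = 0
  · rw [h0] at hq2
    simp only [ite_self, sub_zero] at hq2
    have hpf : p ∈ frs A ν a := Multiset.mem_filter.2 ⟨hpν, by
      rw [hq2, ca_eq_zero hA him a h0]⟩
    rcases frs_cases hA him hI a with h | ⟨q0, h⟩
    · rw [h] at hpf; simp at hpf
    · have hpq0 : p = q0 := by rw [h] at hpf; exact Multiset.mem_singleton.1 hpf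
      obtain ⟨hsl, hq02⟩ := selL_of_single hA him hI a h0 h
      have hq0e : q0 = (selL ν a, selX ν a) := by
        rw [hx, hsl]; exact Prod.ext rfl hq02
      have hf2 : q0.2 = ca A a := by rw [← hpq0]; exact hq2
      have hcount : Multiset.count q0 (ν a) = 1 := by
        have h1 : Multiset.count q0 (frs A ν a) = Multiset.count q0 (ν a) := by
          rw [frs, Multiset.count_filter, if_pos hf2]
        rw [h, Multiset.count_singleton, if_pos rfl] at h1
        omega
      have : p ∈ (ν a).erase q0 := by rw [← hq0e] at hp; exact hp
      rw [hpq0] at this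
      have := Multiset.count_pos.2 this
      rw [Multiset.count_erase_self, hcount] at this
      omega
  · have h1 : 1 ≤ p.1 := hI.len a p hpν
    have h2 := hI.rig a p hpν
    obtain ⟨hd, hc⟩ := diag_facts hA him a
    have h1' : 0 < p.1 := h1
    rw [selL_zero_of_diag hA him hI a h0, if_pos h1'] at hq2
    omega

lemma frs_fOp_card (a c : I) (hc : c ≠ a) :
    Multiset.card (frs A (fOp A a ν) c) ≤ Multiset.card (frs A ν c) :=
  frs_fOp_card' a c hc (hA.offdiag c a hc) (hI.rig c)

lemma frs_fOp_zero (a c : I) (hc : c ≠ a) (h : frs A ν c = 0) :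
    frs A (fOp A a ν) c = 0 := by
  have h1 := frs_fOp_card hA him hI a c hc
  rw [h, Multiset.card_zero] at h1
  exact Multiset.card_eq_zero.1 (Nat.le_zero.1 h1)

lemma frs_fOp_kill (a c : I) (hc : c ≠ a) (hAca : A c a ≠ 0) (hsl : selL ν a = 0) :
    frs A (fOp A a ν) c = 0 := by
  rw [frs, fOp_ne a c ν hc, Multiset.filter_eq_nil]
  rintro q hq hq2
  obtain ⟨p, hp, rfl⟩ := Multiset.mem_map.1 hq
  simp only at hq2
  have h1' : 0 < p.1 := hI.len c p hp
  rw [hsl, if_pos h1'] at hq2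
  have h2 := hI.rig c p hp
  have h3 := hA.offdiag c a hc
  omega

end G
end RCAux

namespace RCAux
variable {I : Type*} [DecidableEq I] {A : I → I → ℤ}

lemma inv_empty : Inv A (emptyRC : RCraw I) := by
  constructor <;> intros <;> simp_all [emptyRC, frs] <;> try exact Or.inl rfl

section Inv
variable (hA : IsBorcherdsCartan A) (him : ∀ a : I, A a a ≤ 0)
variable {ν : RCraw I} (hI : Inv A ν)
include hA him hI

lemma inv_fOp (a : I) : Inv A (fOp A a ν) := by
  have hx := selX_zero hA him hI a
  constructor
  · -- len
    intro c p hp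
    by_cases hc : c = a
    · subst hc
      rw [fOp_self] at hp
      rcases Multiset.mem_add.1 hp with h | h
      · obtain ⟨q, hq, rfl⟩ := Multiset.mem_map.1 h
        exact hI.len c q (Multiset.mem_of_mem_erase hq)
      · rw [Multiset.mem_singleton.1 h]; omega
    · rw [fOp_ne a c ν hc] at hp
      obtain ⟨q, hq, rfl⟩ := Multiset.mem_map.1 hp
      exact hI.len c q hq
  · -- rig
    intro c p hp
    by_cases hc : c = a
    · subst hc
      rw [fOp_self] at hp
      rcases Multiset.mem_add.1 hp with h | h
      · obtain ⟨q, hq, rfl⟩ := Multiset.mem_map.1 h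
        have h1 := hI.rig c q (Multiset.mem_of_mem_erase hq)
        have ht : (if selL ν c < q.1 then A c c else 0) ≤ 0 := by
          have := him c; split <;> omega
        simp only; omega
      · rw [Multiset.mem_singleton.1 h]
        simp only [hx]
        exact le_of_eq rfl
    · rw [fOp_ne a c ν hc] at hp
      obtain ⟨q, hq, rfl⟩ := Multiset.mem_map.1 hp
      have h1 := hI.rig c q hq
      have ht : (if selL ν a < q.1 then A c a else 0) ≤ 0 := by
        have := hA.offdiag c a hc; split <;> omega
      simp only; omega
  · -- one
    intro c h0 p hp
    by_cases hc : c = a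
    · subst hc
      rw [fOp_self] at hp
      rcases Multiset.mem_add.1 hp with h | h
      · obtain ⟨q, hq, rfl⟩ := Multiset.mem_map.1 h
        exact hI.one c h0 q (Multiset.mem_of_mem_erase hq)
      · rw [Multiset.mem_singleton.1 h]
        simp only [selL_zero_of_diag hA him hI c h0]
    · rw [fOp_ne a c ν hc] at hp
      obtain ⟨q, hq, rfl⟩ := Multiset.mem_map.1 hp
      exact hI.one c h0 q hq
  · -- uniq
    intro c
    by_cases hc : c = a
    · subst hc
      rw [frs_fOp_self hA him hI c]
      simp
    · exact le_trans (frs_fOp_card hA him hI a c hc) (hI.uniq c)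
  · -- pair
    intro a' b' hne hab
    by_cases ha' : a' = a
    · subst ha'
      right
      have hb' : b' ≠ a' := hne.symm
      rcases hI.pair a' b' hne hab with h | h
      · exact frs_fOp_kill hA him hI a' b' hb' (fun h' => hab ((hA.zero_iff a' b').2 h'))
          (selL_zero_of_frs hA him hI a' h)
      · exact frs_fOp_zero hA him hI a' b' hb' h
    · by_cases hb' : b' = a
      · subst hb'
        left
        rcases hI.pair a' b' hne hab with h | h
        · exact frs_fOp_zero hA him hI b' a' ha' h
        · exact frs_fOp_kill hA him hI b' a' ha' hab (selL_zero_of_frs hA him hI b' h)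
      · rcases hI.pair a' b' hne hab with h | h
        · exact Or.inl (frs_fOp_zero hA him hI a a' ha' h)
        · exact Or.inr (frs_fOp_zero hA him hI a b' hb' h)

end Inv
end RCAux

namespace RCAux
variable {I : Type*} [DecidableEq I] {A : I → I → ℤ}

lemma ca_add_half (a : I) : ca A a + A a a / 2 = 0 := by
  unfold ca; omega

section E
variable (hA : IsBorcherdsCartan A) (him : ∀ a : I, A a a ≤ 0)
variable {ν : RCraw I} (hI : Inv A ν)
include hA him hI

lemma eOp_fOp (a : I) : eOp A a (fOp A a ν) = some ν := by
  have hx := selX_zero hA him hI a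
  have hI' := inv_fOp hA him hI a
  have hfrs := frs_fOp_self hA him hI a
  have hmemf : (selL ν a + 1, ca A a) ∈ (fOp A a ν) a := by
    have h : (selL ν a + 1, ca A a) ∈ frs A (fOp A a ν) a := by
      rw [hfrs]; exact Multiset.mem_singleton_self _
    exact Multiset.mem_of_mem_filter h
  have hne0 : (fOp A a ν) a ≠ 0 := fun h => by rw [h] at hmemf; simp at hmemf
  have hhalf : -A a a / 2 = ca A a := neg_half_eq_ca hA him a
  have hmin : minPosRows (((fOp A a ν) a).map Prod.snd) = ca A a := by
    apply minPosRows_eq_of (Multiset.mem_map_of_mem _ hmemf)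
    rintro t ht
    obtain ⟨p, hp, rfl⟩ := Multiset.mem_map.1 ht
    exact hI'.rig a p hp
  simp only [eOp]
  rw [if_neg (aa_ne_two hA him a), if_neg (by
    rw [not_or, hmin, hhalf]
    exact ⟨hne0, fun h => h rfl⟩)]
  congr 1
  rw [hhalf]
  have hselE : selE (fOp A a ν) a (ca A a) = selL ν a + 1 := by
    unfold selE
    unfold frs at hfrs
    rw [hfrs, Multiset.map_singleton, minPosRowsN_singleton]
  funext c
  by_cases hc : c = a
  · subst hc
    rw [eRemove_self, hselE]
    have her : ((fOp A c ν) c).erase (selL ν c + 1, ca A c) =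
        Multiset.map (fun p => (p.1, p.2 - if selL ν c < p.1 then A c c else 0))
          ((ν c).erase (selL ν c, selX ν c)) := by
      rw [fOp_self, show (selX ν c - A c c / 2) = ca A c by rw [hx]; rfl,
        add_singleton_eq, Multiset.erase_cons_head]
    rw [her, Multiset.map_map]
    have hid : Multiset.map
        ((fun p : ℕ × ℤ => (p.1, p.2 + if selL ν c + 1 ≤ p.1 then A c c else 0)) ∘
          (fun p : ℕ × ℤ => (p.1, p.2 - if selL ν c < p.1 then A c c else 0)))
        ((ν c).erase (selL ν c, selX ν c)) = (ν c).erase (selL ν c, selX ν c) := by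
      have h1 : ∀ p ∈ (ν c).erase (selL ν c, selX ν c),
          ((fun p : ℕ × ℤ => (p.1, p.2 + if selL ν c + 1 ≤ p.1 then A c c else 0)) ∘
            (fun p : ℕ × ℤ => (p.1, p.2 - if selL ν c < p.1 then A c c else 0))) p = id p := by
        intro p _
        simp only [Function.comp]
        refine Prod.ext rfl ?_
        by_cases h : selL ν c < p.1
        · rw [if_pos h, if_pos (by omega)]; simp only [id_eq]; omega
        · rw [if_neg h, if_neg (by omega)]; simp only [id_eq]; omega
      rw [Multiset.map_congr rfl h1, Multiset.map_id]
    rw [hid]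
    by_cases hL0 : selL ν c = 0
    · rw [if_pos (by omega : selL ν c + 1 = 1), hL0]
      have hnm : ((0 : ℕ), selX ν c) ∉ ν c := fun h => by
        have := hI.len c _ h; simp at this
      rw [Multiset.erase_of_notMem hnm, add_zero]
    · rw [if_neg (by omega : ¬(selL ν c + 1 = 1))]
      have hm : (selL ν c, selX ν c) ∈ ν c := selL_mem hA him hI c hL0
      have h2 : ((selL ν c + 1 - 1 : ℕ), ca A c + A c c / 2) = (selL ν c, selX ν c) := by
        rw [ca_add_half, hx]; norm_num
      rw [h2, add_singleton_eq, Multiset.cons_erase hm]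
  · rw [eRemove_ne a c _ _ hc, hselE, fOp_ne a c ν hc, Multiset.map_map]
    have h1 : ∀ p ∈ ν c,
        ((fun p : ℕ × ℤ => (p.1, p.2 + if selL ν a + 1 ≤ p.1 then A c a else 0)) ∘
          (fun p : ℕ × ℤ => (p.1, p.2 - if selL ν a < p.1 then A c a else 0))) p = id p := by
      intro p _
      simp only [Function.comp]
      refine Prod.ext rfl ?_
      by_cases h : selL ν a < p.1
      · rw [if_pos h, if_pos (by omega)]; simp only [id_eq]; omega
      · rw [if_neg h, if_neg (by omega)]; simp only [id_eq]; omega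
    rw [Multiset.map_congr rfl h1, Multiset.map_id]

lemma frs_fOp_neighbor (a b : I) (hab : a ≠ b) (h0 : A a b ≠ 0) :
    frs A (fOp A b ν) a = 0 := by
  rcases hI.pair a b hab h0 with h | h
  · exact frs_fOp_zero hA him hI b a hab h
  · exact frs_fOp_kill hA him hI b a hab h0 (selL_zero_of_frs hA him hI b h)

lemma eOp_fOp_none (a b : I) (hab : a ≠ b) (h0 : A a b ≠ 0) :
    eOp A a (fOp A b ν) = none := by
  simp only [eOp]
  rw [if_neg (aa_ne_two hA him a), if_pos ?_]
  by_cases hz : (fOp A b ν) a = 0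
  · exact Or.inl hz
  · right
    have hfrs := frs_fOp_neighbor hA him hI a b hab h0
    rw [neg_half_eq_ca hA him a]
    intro heq
    have hm : minPosRows (((fOp A b ν) a).map Prod.snd) ∈ ((fOp A b ν) a).map Prod.snd :=
      minPosRows_mem (by
        intro h
        exact hz (Multiset.map_eq_zero.1 h))
    rw [heq] at hm
    obtain ⟨p, hp, hps⟩ := Multiset.mem_map.1 hm
    have : p ∈ frs A (fOp A b ν) a := Multiset.mem_filter.2 ⟨hp, hps⟩
    rw [hfrs] at this
    simp at this

end E
end RCAux

namespace RCAux
variable {I : Type*} [DecidableEq I] {A : I → I → ℤ}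

lemma map_untouched (s : Multiset (ℕ × ℤ)) {c : ℤ} (hc : c = 0) (L : ℕ) :
    s.map (fun p => (p.1, p.2 - if L < p.1 then c else 0)) = s :=
  map_noop _ _ (fun p _ => by rw [hc]; simp)

lemma map_untouched' (s : Multiset (ℕ × ℤ)) {c : ℤ} (hc : c = 0) (L : ℕ) :
    s.map (fun p => (p.1, p.2 + if L ≤ p.1 then c else 0)) = s :=
  map_noop _ _ (fun p _ => by rw [hc]; simp)

lemma fOp_invariant_color (b a : I) (ν : RCraw I) (hab : a ≠ b) (h0 : A a b = 0) :
    (fOp A b ν) a = ν a := by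
  rw [fOp_ne b a ν hab, map_untouched _ h0]

lemma eRemove_invariant_color (a c : I) (ν : RCraw I) (x : ℤ) (hca : c ≠ a) (h0 : A c a = 0) :
    (eRemove A a ν x) c = ν c := by
  rw [eRemove_ne a c ν x hca, map_untouched' _ h0]

lemma fOp_comm (a b : I) (ν : RCraw I) (hab : a ≠ b) (h0 : A a b = 0) (h0' : A b a = 0) :
    fOp A a (fOp A b ν) = fOp A b (fOp A a ν) := by
  have hba : b ≠ a := hab.symm
  have hfa : (fOp A b ν) a = ν a := fOp_invariant_color b a ν hab h0
  have hfb : (fOp A a ν) b = ν b := fOp_invariant_color a b ν hba h0'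
  have hXa : selX (fOp A b ν) a = selX ν a := by unfold selX; rw [hfa]
  have hXb : selX (fOp A a ν) b = selX ν b := by unfold selX; rw [hfb]
  have hLa : selL (fOp A b ν) a = selL ν a := by unfold selL selX; rw [hfa]
  have hLb : selL (fOp A a ν) b = selL ν b := by unfold selL selX; rw [hfb]
  funext c
  by_cases hca : c = a
  · rw [hca]
    have e1 : (fOp A b (fOp A a ν)) a = (fOp A a ν) a := fOp_invariant_color b a _ hab h0
    rw [e1, fOp_self a (fOp A b ν), fOp_self a ν, hfa, hLa, hXa]
  · by_cases hcb : c = b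
    · rw [hcb]
      have e1 : (fOp A a (fOp A b ν)) b = (fOp A b ν) b := fOp_invariant_color a b _ hba h0'
      rw [e1, fOp_self b (fOp A a ν), fOp_self b ν, hfb, hLb, hXb]
    · rw [fOp_ne a c (fOp A b ν) hca, fOp_ne b c ν hcb, fOp_ne b c (fOp A a ν) hcb,
        fOp_ne a c ν hca, hLa, hLb, Multiset.map_map, Multiset.map_map]
      apply Multiset.map_congr rfl
      intro p _
      simp only [Function.comp]
      exact Prod.ext rfl (by ring)

lemma eOp_fOp_comm (a b : I) (ν : RCraw I) (hab : a ≠ b) (h0 : A a b = 0) (h0' : A b a = 0)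
    (hA2 : A a a ≠ 2) :
    eOp A a (fOp A b ν) = Option.map (fOp A b) (eOp A a ν) := by
  have hba : b ≠ a := hab.symm
  have hfa : (fOp A b ν) a = ν a := fOp_invariant_color b a ν hab h0
  simp only [eOp]
  rw [if_neg hA2, if_neg hA2, hfa]
  by_cases hcond : (ν a = 0 ∨ minPosRows ((ν a).map Prod.snd) ≠ -A a a / 2)
  · rw [if_pos hcond, if_pos hcond]; rfl
  · rw [if_neg hcond, if_neg hcond, Option.map_some]
    congr 1
    have hE : selE (fOp A b ν) a (-A a a / 2) = selE ν a (-A a a / 2) := by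
      unfold selE; rw [hfa]
    have hrb : (eRemove A a ν (-A a a / 2)) b = ν b :=
      eRemove_invariant_color a b ν _ hba h0'
    have hXb : selX (eRemove A a ν (-A a a / 2)) b = selX ν b := by unfold selX; rw [hrb]
    have hLb : selL (eRemove A a ν (-A a a / 2)) b = selL ν b := by
      unfold selL selX; rw [hrb]
    funext c
    by_cases hca : c = a
    · rw [hca]
      have e1 : (fOp A b (eRemove A a ν (-A a a / 2))) a = (eRemove A a ν (-A a a / 2)) a :=
        fOp_invariant_color b a _ hab h0
      rw [e1, eRemove_self a (fOp A b ν), eRemove_self a ν, hE, hfa]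
    · by_cases hcb : c = b
      · rw [hcb]
        rw [eRemove_ne a b (fOp A b ν) _ hba, map_untouched' _ h0',
          fOp_self b (eRemove A a ν (-A a a / 2)), fOp_self b ν, hLb, hXb, hrb]
      · rw [eRemove_ne a c (fOp A b ν) _ hca, hE, fOp_ne b c ν hcb,
          fOp_ne b c (eRemove A a ν (-A a a / 2)) hcb, hLb,
          eRemove_ne a c ν _ hca, Multiset.map_map, Multiset.map_map]
        apply Multiset.map_congr rfl
        intro p _
        simp only [Function.comp]
        exact Prod.ext rfl (by ring)

end RCAux

namespace RCAux
variable {I : Type*} [DecidableEq I] {A : I → I → ℤ}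

/-- the word action. -/
def Phi (A : I → I → ℤ) : List I → RCraw I := fun l => l.foldr (fOp A) emptyRC

lemma Phi_cons (a : I) (l : List I) : Phi A (a :: l) = fOp A a (Phi A l) := rfl

/-- class of a word in the RAAG monoid. -/
def mkl (A : I → I → ℤ) (l : List I) : PresentedMonoid (raagRel A) :=
  PresentedMonoid.mk (raagRel A) (FreeMonoid.ofList l)

lemma mkl_cons (a : I) (l : List I) :
    mkl A (a :: l) = PresentedMonoid.mk (raagRel A) (FreeMonoid.of a) * mkl A l := by
  rw [mkl, show FreeMonoid.ofList (a :: l) = FreeMonoid.of a * FreeMonoid.ofList l from rfl,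
    map_mul, mkl]

lemma mkl_swap {a b : I} (h : A a b = 0) (l : List I) :
    mkl A (a :: b :: l) = mkl A (b :: a :: l) := by
  have hq : PresentedMonoid.mk (raagRel A) (FreeMonoid.of a * FreeMonoid.of b) =
      PresentedMonoid.mk (raagRel A) (FreeMonoid.of b * FreeMonoid.of a) :=
    Quotient.sound (ConGen.Rel.of _ _ ⟨a, b, h, rfl, rfl⟩)
  have h1 : FreeMonoid.ofList (a :: b :: l) =
      (FreeMonoid.of a * FreeMonoid.of b) * FreeMonoid.ofList l := rfl
  have h2 : FreeMonoid.ofList (b :: a :: l) =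
      (FreeMonoid.of b * FreeMonoid.of a) * FreeMonoid.ofList l := rfl
  rw [mkl, mkl, h1, h2, map_mul, hq, ← map_mul]

section Words
variable (hA : IsBorcherdsCartan A) (him : ∀ a : I, A a a ≤ 0)
include hA him

lemma inv_Phi (l : List I) : Inv A (Phi A l) := by
  induction l with
  | nil => exact inv_empty
  | cons a t ih => exact inv_fOp hA him ih a

lemma step_back : ∀ (l : List I) (a : I) (ν' : RCraw I),
    eOp A a (Phi A l) = some ν' → ∃ l', ν' = Phi A l' ∧ mkl A (a :: l') = mkl A l := by
  intro l
  induction l with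
  | nil =>
    intro a ν' h
    exfalso
    simp only [Phi, List.foldr, eOp] at h
    rw [if_neg (aa_ne_two hA him a)] at h
    simp [emptyRC] at h
  | cons b t ih =>
    intro a ν' h
    by_cases hab : a = b
    · subst hab
      rw [Phi_cons, eOp_fOp hA him (inv_Phi hA him t) a] at h
      exact ⟨t, (Option.some.inj h).symm, rfl⟩
    · by_cases h0 : A a b = 0
      · have h0' : A b a = 0 := (hA.zero_iff a b).1 h0
        rw [Phi_cons, eOp_fOp_comm a b (Phi A t) hab h0 h0' (aa_ne_two hA him a)] at h
        cases he : eOp A a (Phi A t) with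
        | none => rw [he] at h; simp at h
        | some μ =>
          rw [he, Option.map_some] at h
          obtain ⟨t', ht1, ht2⟩ := ih a μ he
          refine ⟨b :: t', ?_, ?_⟩
          · rw [← Option.some.inj h, ht1, Phi_cons]
          · calc mkl A (a :: b :: t') = mkl A (b :: a :: t') := mkl_swap h0 t'
              _ = PresentedMonoid.mk (raagRel A) (FreeMonoid.of b) * mkl A (a :: t') :=
                mkl_cons b _
              _ = PresentedMonoid.mk (raagRel A) (FreeMonoid.of b) * mkl A t := by rw [ht2]
              _ = mkl A (b :: t) := (mkl_cons b t).symm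
      · rw [Phi_cons, eOp_fOp_none hA him (inv_Phi hA him t) a b hab h0] at h
        simp at h

lemma phi_inj : ∀ l v : List I, Phi A l = Phi A v → mkl A l = mkl A v := by
  intro l
  induction l with
  | nil =>
    intro v h
    cases v with
    | nil => rfl
    | cons b t =>
      exfalso
      have h1 := congrFun h b
      rw [Phi_cons, fOp_self b (Phi A t)] at h1
      have h2 := congrArg Multiset.card h1
      simp [Phi, emptyRC] at h2
  | cons a t ih =>
    intro v h
    have hK1 : eOp A a (Phi A (a :: t)) = some (Phi A t) := by
      rw [Phi_cons]; exact eOp_fOp hA him (inv_Phi hA him t) a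
    rw [h] at hK1
    obtain ⟨v', hv1, hv2⟩ := step_back hA him v a _ hK1
    rw [← hv2, mkl_cons, mkl_cons, ih v' hv1]

lemma RCinf_Phi (l : List I) : RCinf A (Phi A l) := by
  induction l with
  | nil => exact RCinf.empty
  | cons a t ih => exact RCinf.fstep a _ ih

lemma RCinf_exists (ν : RCraw I) (h : RCinf A ν) : ∃ l, ν = Phi A l := by
  induction h with
  | empty => exact ⟨[], rfl⟩
  | fstep a ν hν ih => obtain ⟨l, rfl⟩ := ih; exact ⟨a :: l, rfl⟩
  | estep a ν ν' hν he ih =>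
    obtain ⟨l, rfl⟩ := ih
    obtain ⟨l', h1, _⟩ := step_back hA him l a ν' he
    exact ⟨l', h1⟩

end Words
end RCAux

/-- In the purely imaginary case, the map from the right-angled Artin monoid
`⟨g_a | g_a g_{a'} = g_{a'} g_a if A a a' = 0⟩` to `RC(∞)` sending the class of a word
`g_{a_1} ⋯ g_{a_r}` to `f_{a_1} ⋯ f_{a_r}(ν_∅, J_∅)` is well defined and a bijection onto

`RC(∞)`. -/
theorem rc_purely_imaginary_raag {I : Type*} [DecidableEq I] (A : I → I → ℤ)
    (hA : IsBorcherdsCartan A) (him : ∀ a : I, A a a ≤ 0) :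
    ∃ F : PresentedMonoid (raagRel A) → RCraw I,
      (∀ w : FreeMonoid I,
        F (PresentedMonoid.mk (raagRel A) w) = w.toList.foldr (fOp A) emptyRC) ∧
      Function.Injective F ∧
      Set.range F = {ν : RCraw I | RCinf A ν} := by
  classical
  let f : I → Function.End (RCraw I) := fun a => fOp A a
  have hcomm : ∀ x y, raagRel A x y → FreeMonoid.lift f x = FreeMonoid.lift f y := by
    rintro x y ⟨a, b, h0, rfl, rfl⟩
    rw [map_mul, map_mul]
    show f a * f b = f b * f a
    by_cases hab : a = b
    · subst hab; rfl
    · have h0' : A b a = 0 := (hA.zero_iff a b).1 h0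
      show (fOp A a ∘ fOp A b) = (fOp A b ∘ fOp A a)
      funext ν
      exact RCAux.fOp_comm a b ν hab h0 h0'
  let L : PresentedMonoid (raagRel A) →* Function.End (RCraw I) :=
    PresentedMonoid.lift f hcomm
  have hend : ∀ (l : List I) (ν : RCraw I),
      ((l.map f).prod : Function.End (RCraw I)) ν = l.foldr (fOp A) ν := by
    intro l
    induction l with
    | nil => intro ν; rfl
    | cons a t ih =>
      intro ν
      rw [List.map_cons, List.prod_cons]
      show fOp A a (((t.map f).prod : Function.End (RCraw I)) ν) = _
      rw [ih ν]
      rfl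
  have hF : ∀ w : FreeMonoid I,
      L (PresentedMonoid.mk (raagRel A) w) emptyRC = w.toList.foldr (fOp A) emptyRC := by
    intro w
    have h1 : L (PresentedMonoid.mk (raagRel A) w) = FreeMonoid.lift f w := rfl
    rw [h1, FreeMonoid.lift_apply]
    exact hend w.toList emptyRC
  have hPhiF : ∀ l : List I, L (RCAux.mkl A l) emptyRC = RCAux.Phi A l := by
    intro l
    exact hF (FreeMonoid.ofList l)
  refine ⟨fun m => L m emptyRC, hF, ?_, ?_⟩
  · intro m1 m2 hm
    obtain ⟨w1, rfl⟩ := PresentedMonoid.surjective_mk (rels := raagRel A) m1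
    obtain ⟨w2, rfl⟩ := PresentedMonoid.surjective_mk (rels := raagRel A) m2
    have hphi : RCAux.Phi A w1.toList = RCAux.Phi A w2.toList := by
      have e1 := hF w1
      have e2 := hF w2
      simp only at hm
      rw [RCAux.Phi, RCAux.Phi, ← e1, ← e2]
      exact hm
    have := RCAux.phi_inj hA him w1.toList w2.toList hphi
    rw [RCAux.mkl, RCAux.mkl, FreeMonoid.ofList_toList, FreeMonoid.ofList_toList] at this
    exact this
  · ext ν
    simp only [Set.mem_range, Set.mem_setOf_eq]
    constructor
    · rintro ⟨m, rfl⟩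
      obtain ⟨w, rfl⟩ := PresentedMonoid.surjective_mk (rels := raagRel A) m
      rw [hF w]
      exact RCAux.RCinf_Phi hA him w.toList
    · intro h
      obtain ⟨l, rfl⟩ := RCAux.RCinf_exists hA him _ h
      exact ⟨RCAux.mkl A l, hPhiF l⟩
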